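/- arXiv:1903.07442 — 6 statements merged into one kernel-verified Lean document; each statement's English description precedes it below -/
import Mathlib

section
/- Let p be a prime and let a, b be positive integers with p^a - 1 ≤ p^b - 1 ≤ (p^a - 1)^2 (i.e., s ≤ t ≤ s^2 where s = p^a - 1 and t = p^b - 1, with s > 1), and suppose s + t divides st(s+1)(t+1). Then a = b (equivalently s = t). -/
theorem stmt_2 (p a b : ℕ) (hp : p.Prime) (ha : 0 < a) (hb : 0 < b)
    (hs : 1 < p ^ a - 1)
    (hst : p ^ a - 1 ≤ p ^ b - 1)
    (hts : p ^ b - 1 ≤ (p ^ a - 1) ^ 2)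
    (hdiv : (p ^ a - 1) + (p ^ b - 1) ∣
      (p ^ a - 1) * (p ^ b - 1) * p ^ a * p ^ b) :
    a = b := by
  have hp2 : 2 ≤ p := hp.two_le
  have hpa1 : 1 ≤ p ^ a := Nat.one_le_pow _ _ hp.pos
  have hpb1 : 1 ≤ p ^ b := Nat.one_le_pow _ _ hp.pos
  set s := p ^ a - 1 with hsdef
  set t := p ^ b - 1 with htdef
  have hsa : p ^ a = s + 1 := by omega
  have hta : p ^ b = t + 1 := by omega
  -- a ≤ b
  have hab : a ≤ b := by
    by_contra h
    have : p ^ b < p ^ a := Nat.pow_lt_pow_right hp.one_lt (by omega)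
    omega
  by_contra hne
  have hab' : a < b := lt_of_le_of_ne hab hne
  -- b < 2a
  have hb2a : b < 2 * a := by
    by_contra h
    have h1 : p ^ (2 * a) ≤ p ^ b := Nat.pow_le_pow_right hp.pos (by omega)
    have h2 : p ^ (2 * a) = (p ^ a) ^ 2 := by rw [mul_comm, pow_mul]
    have h3 : (p ^ a) ^ 2 = s ^ 2 + 2 * s + 1 := by rw [hsa]; ring
    omega
  -- d ∣ 2 * (s * t)
  have hdiv2 : s + t ∣ 2 * (s * t) := by
    rcases hp.eq_two_or_odd' with hp2' | hodd
    · -- p = 2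
      subst hp2'
      have ha2 : 2 ≤ a := by
        have h : (2:ℕ) ^ 1 < 2 ^ a := by omega
        exact (Nat.pow_lt_pow_iff_right (by norm_num)).mp h
      have hb2 : 2 ≤ b := by omega
      set m := 2 ^ (a - 1) + 2 ^ (b - 1) - 1 with hm
      have hsplit_a : 2 ^ a = 2 * 2 ^ (a - 1) := by
        rw [← pow_succ']; congr 1; omega
      have hsplit_b : 2 ^ b = 2 * 2 ^ (b - 1) := by
        rw [← pow_succ']; congr 1; omega
      have h2a1 : 2 ∣ 2 ^ (a - 1) := dvd_pow_self 2 (by omega)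
      have h2b1 : 2 ∣ 2 ^ (b - 1) := dvd_pow_self 2 (by omega)
      have hpos : 1 ≤ 2 ^ (a - 1) := Nat.one_le_pow _ _ (by omega)
      have hpos' : 1 ≤ 2 ^ (b - 1) := Nat.one_le_pow _ _ (by omega)
      have hdm : s + t = 2 * m := by omega
      have hmodd : ¬ (2 ∣ m) := by omega
      have hmdvd : m ∣ s * t * 2 ^ a * 2 ^ b := dvd_trans ⟨2, by omega⟩ hdiv
      have hcop : Nat.Coprime m (2 ^ a * 2 ^ b) := by
        have : Nat.Coprime m 2 := (Nat.prime_two.coprime_iff_not_dvd.mpr hmodd).symm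
        exact Nat.Coprime.mul_right (this.pow_right _) (this.pow_right _)
      have hmst : m ∣ s * t := by
        refine hcop.dvd_of_dvd_mul_right ?_
        have : s * t * 2 ^ a * 2 ^ b = s * t * (2 ^ a * 2 ^ b) := by ring
        rwa [this] at hmdvd
      rw [hdm]
      exact mul_dvd_mul_left 2 hmst
    · -- p odd
      have hnd : ¬ p ∣ (s + t) := by
        intro h
        have h1 : p ∣ p ^ a := dvd_pow_self p ha.ne'
        have h2 : p ∣ p ^ b := dvd_pow_self p hb.ne'
        have : p ∣ 2 := by
          have : p ∣ (s + 1) + (t + 1) := by rw [← hsa, ← hta]; exact Nat.dvd_add h1 h2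
          have h4 : (s + 1) + (t + 1) = (s + t) + 2 := by ring
          rw [h4] at this
          exact (Nat.dvd_add_right h).mp this
        have := Nat.le_of_dvd (by norm_num) this
        have h5 : p % 2 = 1 := Nat.odd_iff.mp hodd
        omega
      have hcop : Nat.Coprime (s + t) (p ^ a * p ^ b) := by
        have : Nat.Coprime (s + t) p := (hp.coprime_iff_not_dvd.mpr hnd).symm
        exact Nat.Coprime.mul_right (this.pow_right _) (this.pow_right _)
      have : s + t ∣ s * t := by
        refine hcop.dvd_of_dvd_mul_right ?_
        have h5 : s * t * p ^ a * p ^ b = s * t * (p ^ a * p ^ b) := by ring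
        rwa [h5] at hdiv
      exact Dvd.dvd.mul_left this 2
  -- gcd argument
  set g := Nat.gcd s t with hg
  have hspos : 0 < s := by omega
  have hgpos : 0 < g := Nat.gcd_pos_of_pos_left t hspos
  set s' := s / g with hs'
  set t' := t / g with ht'
  have hgs : g * s' = s := Nat.mul_div_cancel' (Nat.gcd_dvd_left s t)
  have hgt : g * t' = t := Nat.mul_div_cancel' (Nat.gcd_dvd_right s t)
  have hcop' : Nat.Coprime s' t' := Nat.coprime_div_gcd_div_gcd hgpos
  have hd : s + t = g * (s' + t') := by rw [Nat.mul_add, hgs, hgt]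
  have hdvd3 : s' + t' ∣ 2 * g * (s' * t') := by
    have h6 : g * (s' + t') ∣ g * (2 * g * (s' * t')) := by
      rw [← hd]
      have : g * (2 * g * (s' * t')) = 2 * ((g * s') * (g * t')) := by ring
      rw [this, hgs, hgt]
      exact hdiv2
    exact (mul_dvd_mul_iff_left hgpos.ne').mp h6
  have hcop2 : Nat.Coprime (s' + t') (s' * t') := by
    have c1 : Nat.Coprime (s' + t') t' := Nat.coprime_add_self_left.mpr hcop'
    have c2 : Nat.Coprime (s' + t') s' := by
      have := Nat.coprime_add_self_left.mpr hcop'.symm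
      rwa [Nat.add_comm] at this
    exact Nat.Coprime.mul_right c2 c1
  have hdvd4 : s' + t' ∣ 2 * g := hcop2.dvd_of_dvd_mul_right hdvd3
  have hle : s' + t' ≤ 2 * g := Nat.le_of_dvd (by omega) hdvd4
  have hdle : s + t ≤ 2 * g ^ 2 := by
    calc s + t = g * (s' + t') := hd
    _ ≤ g * (2 * g) := Nat.mul_le_mul_left g hle
    _ = 2 * g ^ 2 := by ring
  -- g ≤ p^(b-a) - 1
  set u := p ^ (b - a) with hu
  have hu2 : 2 ≤ u := by
    calc 2 ≤ p := hp2
    _ = p ^ 1 := (pow_one p).symm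
    _ ≤ u := Nat.pow_le_pow_right hp.pos (by omega)
  have hgu : g ≤ u - 1 := by
    have h7 : g ∣ t - s := Nat.dvd_sub (Nat.gcd_dvd_right s t) (Nat.gcd_dvd_left s t)
    have h8 : t - s = p ^ a * (u - 1) := by
      have : p ^ a * u = p ^ b := by rw [hu, ← pow_add]; congr 1; omega
      have h9 : p ^ a * (u - 1) = p ^ a * u - p ^ a := by rw [Nat.mul_sub, mul_one]
      omega
    have hcopg : Nat.Coprime (p ^ a) g := by
      have : Nat.Coprime (p ^ a) s := by
        rw [hsa]; simp [Nat.coprime_self_add_left]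
      exact this.coprime_dvd_right (Nat.gcd_dvd_left s t)
    have h10 : g ∣ u - 1 := by
      have := h7
      rw [h8] at this
      exact (Nat.Coprime.dvd_of_dvd_mul_left (hcopg.symm) this)
    exact Nat.le_of_dvd (by omega) h10
  -- final contradiction
  have hub : 2 * (u * u) ≤ p ^ b := by
    have h11 : u * u = p ^ (2 * (b - a)) := by rw [hu, ← pow_add]; congr 1; omega
    have h12 : p ^ (2 * (b - a)) ≤ p ^ (b - 1) := Nat.pow_le_pow_right hp.pos (by omega)
    have h13 : p * p ^ (b - 1) = p ^ b := by rw [← pow_succ']; congr 1; omega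
    calc 2 * (u * u) ≤ p * p ^ (b - 1) := by
          rw [h11]; exact Nat.mul_le_mul hp2 h12
    _ = p ^ b := h13
  have hfin : 2 * g ^ 2 ≤ 2 * ((u - 1) * (u - 1)) := by
    have hm := Nat.mul_le_mul hgu hgu
    have he : g ^ 2 = g * g := pow_two g
    omega
  have hexp : 2 * ((u - 1) * (u - 1)) + 4 * u = 2 * (u * u) + 2 := by
    obtain ⟨w, hw⟩ : ∃ w, u = w + 2 := ⟨u - 2, by omega⟩
    rw [hw, show w + 2 - 1 = w + 1 from rfl]
    ring
  omega
end

section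
/- For every prime power q ≥ 2 (indeed every integer q ≥ 2), q^3 + q^2 - 1 does not divide q^5(q^2+1)(q^3-1). -/
theorem stmt_5 (q : ℤ) (hq : 2 ≤ q) :
    ¬ (q ^ 3 + q ^ 2 - 1 ∣ q ^ 5 * (q ^ 2 + 1) * (q ^ 3 - 1)) := by
  intro h
  obtain ⟨c, hc⟩ := h
  have h2 : q ^ 3 + q ^ 2 - 1 ∣ 3 * q ^ 2 + 2 * q - 3 := by
    refine ⟨q ^ 7 - q ^ 6 + 2 * q ^ 5 - 2 * q ^ 4 + q ^ 3 - 2 * q + 3 - c, ?_⟩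
    linear_combination -hc
  rcases eq_or_lt_of_le hq with h2' | h3
  · subst q; omega
  · have hpos : 0 < 3 * q ^ 2 + 2 * q - 3 := by nlinarith
    have := Int.le_of_dvd hpos h2
    nlinarith
end

section
/- For every integer q ≥ 2, q^3 + q^2 - 1 does not divide q^5(q^2 - 1)(q^3 + 1). -/
theorem stmt_6 (q : ℤ) (hq : 2 ≤ q) :
    ¬ (q ^ 3 + q ^ 2 - 1 ∣ q ^ 5 * (q ^ 2 - 1) * (q ^ 3 + 1)) := by
  intro h
  have key : q ^ 5 * (q ^ 2 - 1) * (q ^ 3 + 1) =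
      (q ^ 3 + q ^ 2 - 1) * (q ^ 7 - q ^ 6 + 2 * q ^ 4 - 3 * q ^ 3 + 2 * q ^ 2 - 3)
        + (5 * q ^ 2 - 3) := by ring
  have h2 : q ^ 3 + q ^ 2 - 1 ∣ 5 * q ^ 2 - 3 := by
    have := (Int.dvd_add_right (Dvd.intro _ rfl)).mp (key ▸ h)
    exact this
  rcases eq_or_lt_of_le hq with h2' | h2'
  · rw [← h2'] at h2; norm_num at h2
  · rcases eq_or_lt_of_le (by linarith : (3:ℤ) ≤ q) with h3' | h3'
    · rw [← h3'] at h2; norm_num at h2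
    · have hq4 : (4:ℤ) ≤ q := by linarith
      have hpos : 0 < 5 * q ^ 2 - 3 := by nlinarith
      have hle := Int.le_of_dvd hpos h2
      nlinarith [sq_nonneg q, sq_nonneg (q - 4)]
end

section
/- For every integer q ≥ 2, q^4 + q^3 - 1 does not divide q^7(q^4 - 1)(q^3 + 1). -/
theorem stmt_7 (q : ℤ) (hq : 2 ≤ q) :
    ¬ (q ^ 4 + q ^ 3 - 1 ∣ q ^ 7 * (q ^ 4 - 1) * (q ^ 3 + 1)) := by
  intro h
  rcases le_or_gt q 7 with h7 | h7
  · interval_cases q <;> norm_num at h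
  · have hd : q ^ 4 + q ^ 3 - 1 ∣ 9 * q ^ 3 - 3 * q ^ 2 + 4 * q - 6 := by
      have : 9 * q ^ 3 - 3 * q ^ 2 + 4 * q - 6 =
          (q ^ 4 + q ^ 3 - 1) * (q ^ 10 - q ^ 9 + q ^ 8 - q ^ 5 + 2 * q ^ 4 - 3 * q ^ 3
            + 3 * q ^ 2 - 4 * q + 6) - q ^ 7 * (q ^ 4 - 1) * (q ^ 3 + 1) := by ring
      exact this ▸ dvd_sub (Dvd.intro _ rfl) h
    have hpos : 0 < 9 * q ^ 3 - 3 * q ^ 2 + 4 * q - 6 := by nlinarith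
    have := Int.le_of_dvd hpos hd
    nlinarith
end

section
/- For every integer q ≥ 2, q^5 + q^3 - 1 does not divide q^8(q^5 - 1)(q^3 + 1). -/
theorem stmt_8 (q : ℤ) (hq : 2 ≤ q) :
    ¬ (q ^ 5 + q ^ 3 - 1 ∣ q ^ 8 * (q ^ 5 - 1) * (q ^ 3 + 1)) := by
  intro h
  have hR : q ^ 5 + q ^ 3 - 1 ∣ 2*q^4 + 3*q^3 + q^2 - 2*q - 2 := by
    have h2 := dvd_sub h (dvd_mul_right (q ^ 5 + q ^ 3 - 1)
      (q^11 - q^9 + q^8 + q^7 - q^6 - q^5 + q^3 + q^2 - 2*q - 2))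
    have e : q ^ 8 * (q ^ 5 - 1) * (q ^ 3 + 1) -
        (q ^ 5 + q ^ 3 - 1) * (q^11 - q^9 + q^8 + q^7 - q^6 - q^5 + q^3 + q^2 - 2*q - 2)
        = 2*q^4 + 3*q^3 + q^2 - 2*q - 2 := by ring
    rwa [e] at h2
  rcases eq_or_lt_of_le hq with h2 | h3
  · rw [← h2] at hR
    norm_num at hR
  · have h3 : 3 ≤ q := h3
    have hpos : 0 < 2*q^4 + 3*q^3 + q^2 - 2*q - 2 := by nlinarith
    have hle := Int.le_of_dvd hpos hR
    have hq4 : (3:ℤ) * q^4 ≤ q * q^4 := by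
      have : (0:ℤ) ≤ q^4 := by positivity
      nlinarith
    nlinarith [sq_nonneg q, sq_nonneg (q-3), mul_nonneg (sq_nonneg q) (sq_nonneg (q-3))]
end

section
/- Let s, t be integers with 1 < s < t, and suppose positive integers b, x, j, n satisfy: n(xt + 1) = (s+1)(st+1), bs = xt, and n = jt + (s+1) with j ≥ 0. Then x = s (hence the block size bs + 1 equals st + 1). -/
theorem stmt_12 (s t b x j n : ℤ) (hs : 1 < s) (hst : s < t)
    (hb : 0 < b) (hx : 0 < x) (hn : 0 < n) (hj : 0 ≤ j)
    (h1 : n * (x * t + 1) = (s + 1) * (s * t + 1))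
    (h2 : b * s = x * t)
    (h3 : n = j * t + (s + 1)) :
    x = s := by
  have ht : (0:ℤ) < t := by linarith
  have keyt : t * (j * (x * t + 1)) = t * ((s + 1) * (s - x)) := by
    linear_combination h1 - (x * t + 1) * h3
  have key : j * (x * t + 1) = (s + 1) * (s - x) :=
    mul_left_cancel₀ (by linarith : (t:ℤ) ≠ 0) keyt
  have hxt : t ≤ x * t := le_mul_of_one_le_left (le_of_lt ht) hx
  have hxle : x ≤ s := by nlinarith
  rcases lt_or_eq_of_le hxle with hlt | h
  · exfalso
    have hjlt : j < s - x := by nlinarith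
    have hm : j + x = s * (s - x + 1 - j * b) := by
      linear_combination key + j * h2
    have hmpos : 0 < s - x + 1 - j * b := by
      by_contra hc
      push_neg at hc
      nlinarith
    have : 1 ≤ s - x + 1 - j * b := hmpos
    nlinarith
  · exact h
end
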